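/- arXiv:2505.02474 — 2 statements merged into one kernel-verified Lean document; each statement's English description precedes it below -/
import Mathlib

section
/- If the Banach algebra A_Φ(G)** equipped with the first Arens product has a left identity, then UCB_Ψ(Ĝ) = PM_Ψ(G). -/
open MeasureTheory Filter Topology NormedSpace
open scoped ENNReal ZeroAtInfty

noncomputable section

/-! ### Young functions and the Δ₂ and MA conditions -/

/-- A (real-valued, continuous) Young function. -/
structure IsYoungFunction (Φ : ℝ → ℝ) : Prop where
  even : ∀ x, Φ (-x) = Φ x
  convexOn : ConvexOn ℝ Set.univ Φ
  nonneg : ∀ x, 0 ≤ Φ x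
  map_zero : Φ 0 = 0
  continuous : Continuous Φ
  tendsto_atTop : Tendsto Φ atTop atTop

/-- `(Φ, Ψ)` is a complementary pair of Young functions:
`Ψ y = sup { x * |y| - Φ x : x ≥ 0 }`. -/
def IsComplementaryYoungPair (Φ Ψ : ℝ → ℝ) : Prop :=
  IsYoungFunction Φ ∧ IsYoungFunction Ψ ∧
    ∀ y, Ψ y = sSup {z | ∃ x ≥ (0 : ℝ), z = x * |y| - Φ x}

/-- The Δ₂-condition for a Young function. -/
def HasDeltaTwo (Φ : ℝ → ℝ) : Prop :=
  ∃ k > (0 : ℝ), ∃ x₀ ≥ (0 : ℝ), ∀ x ≥ x₀, Φ (2 * x) ≤ k * Φ x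

/-- The Milnes–Akimonič (MA) condition for a Young function. -/
def HasMACondition (Φ : ℝ → ℝ) : Prop :=
  ∀ ε > (0 : ℝ), ∃ β > (1 : ℝ), ∃ x₀ ≥ (0 : ℝ), ∀ x ≥ x₀,
    β * deriv Φ x ≤ deriv Φ ((1 + ε) * x)

/-! ### Orlicz spaces -/

section Orlicz

variable {G : Type*} [MeasurableSpace G]

/-- Membership in the Orlicz space `L^Φ(G)`. -/
def MemOrlicz (Φ : ℝ → ℝ) (μ : Measure G) (f : G → ℂ) : Prop :=
  AEStronglyMeasurable f μ ∧ ∃ β > (0 : ℝ), ∫⁻ x, ENNReal.ofReal (Φ (β * ‖f x‖)) ∂μ < ⊤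

/-- The Luxemburg (gauge) norm `N_Φ(f)` on `L^Φ(G)`. -/
def luxemburgNorm (Φ : ℝ → ℝ) (μ : Measure G) (f : G → ℂ) : ℝ :=
  sInf {k | 0 < k ∧ ∫⁻ x, ENNReal.ofReal (Φ (‖f x‖ / k)) ∂μ ≤ 1}

/-- The Orlicz norm `‖f‖_Φ`, where `Ψ` is the Young function complementary to `Φ`. -/
def orliczNorm (Φ Ψ : ℝ → ℝ) (μ : Measure G) (f : G → ℂ) : ℝ :=
  sSup {r | ∃ g : G → ℂ, (∫⁻ x, ENNReal.ofReal (Ψ (‖g x‖)) ∂μ ≤ 1) ∧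
    r = ∫ x, ‖f x‖ * ‖g x‖ ∂μ}

end Orlicz

/-! ### The Orlicz Figà-Talamanca Herz algebra `A_Φ(G)` -/

section Aphi

variable {G : Type*} [MeasurableSpace G] [Group G] [TopologicalSpace G]

/-- `f, g` give an admissible representation `u = ∑' n, f n ⋆ (g n)ᵛ` of `u` for `A_Φ(G)`,
where `ǧ x = g x⁻¹`, so that `(f ⋆ ǧ) x = ∫ y, f y * g (x⁻¹ * y)`. -/
def IsAphiDecomposition (μ : Measure G) (Φ Ψ : ℝ → ℝ) (u : G → ℂ)
    (f g : ℕ → G → ℂ) : Prop :=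
  (∀ n, MemOrlicz Φ μ (f n)) ∧ (∀ n, MemOrlicz Ψ μ (g n)) ∧
    Summable (fun n => luxemburgNorm Φ μ (f n) * orliczNorm Ψ Φ μ (g n)) ∧
    ∀ x, u x = ∑' n, ∫ y, f n y * g n (x⁻¹ * y) ∂μ

/-- Membership in `A_Φ(G)` for an element of `C₀(G, ℂ)`. -/
def MemAphi (μ : Measure G) (Φ Ψ : ℝ → ℝ) (u : C₀(G, ℂ)) : Prop :=
  ∃ f g, IsAphiDecomposition μ Φ Ψ (⇑u) f g

/-- The norm of `A_Φ(G)`. -/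
def aphiNorm (μ : Measure G) (Φ Ψ : ℝ → ℝ) (u : C₀(G, ℂ)) : ℝ :=
  sInf {r | ∃ f g, IsAphiDecomposition μ Φ Ψ (⇑u) f g ∧
    r = ∑' n, luxemburgNorm Φ μ (f n) * orliczNorm Ψ Φ μ (g n)}

/-- `A`, together with the embedding `ι : A → C₀(G, ℂ)`, *is* the Orlicz
Figà-Talamanca Herz algebra `A_Φ(G)`: a commutative Banach algebra of
`C₀`-functions (with pointwise operations) whose members are exactly the functions
admitting an `A_Φ`-decomposition, and carrying the `A_Φ(G)`-norm. -/
structure IsOrliczFigaTalamancaHerzAlgebra (μ : Measure G) (Φ Ψ : ℝ → ℝ)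
    (A : Type*) [NonUnitalNormedCommRing A] [NormedSpace ℂ A]
    (ι : A → C₀(G, ℂ)) : Prop where
  injective : Function.Injective ι
  map_add : ∀ a b, ι (a + b) = ι a + ι b
  map_smul : ∀ (c : ℂ) (a), ι (c • a) = c • ι a
  map_mul : ∀ a b, ι (a * b) = ι a * ι b
  mem_range_iff : ∀ u, (∃ a, ι a = u) ↔ MemAphi μ Φ Ψ u
  norm_eq : ∀ a, ‖a‖ = aphiNorm μ Φ Ψ (ι a)

end Aphi

/-! ### The first Arens product on the double dual of a Banach algebra -/

section Arens

variable (A : Type*) [NonUnitalNormedRing A] [NormedSpace ℂ A]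
  [SMulCommClass ℂ A A] [IsScalarTower ℂ A A]

open ContinuousLinearMap in
/-- The module action `u • T` of `A` on its dual: `⟨u • T, v⟩ = ⟨T, u * v⟩`. -/
def dotAct (u : A) (T : StrongDual ℂ A) : StrongDual ℂ A :=
  T.comp (ContinuousLinearMap.mul ℂ A u)

open ContinuousLinearMap in
/-- The action `dotAct` as a continuous bilinear map, `(T, u) ↦ u • T`. -/
def dotActR : StrongDual ℂ A →L[ℂ] A →L[ℂ] StrongDual ℂ A :=
  ((compL ℂ A (A →L[ℂ] A) (StrongDual ℂ A)).flip (ContinuousLinearMap.mul ℂ A)).comp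
    (compL ℂ A A ℂ)

open ContinuousLinearMap in
/-- The operation `Γ ⊙ T` on `A** × A*`: `⟨Γ ⊙ T, u⟩ = ⟨Γ, u • T⟩`. -/
def arensOdot : StrongDual ℂ (StrongDual ℂ A) →L[ℂ] StrongDual ℂ A →L[ℂ] StrongDual ℂ A :=
  letI : SeminormedAddCommGroup (A →L[ℂ] StrongDual ℂ A) := inferInstance
  letI : NormedSpace ℂ (A →L[ℂ] StrongDual ℂ A) := inferInstance
  ((compL ℂ (StrongDual ℂ A) (A →L[ℂ] StrongDual ℂ A) (StrongDual ℂ A)).flip (dotActR A)).comp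
    (compL ℂ A (StrongDual ℂ A) ℂ)

/-- The first Arens product `Γ' □ Γ` on the double dual `A**`:
`⟨Γ' □ Γ, T⟩ = ⟨Γ', Γ ⊙ T⟩`. -/
def arens (Γ' Γ : StrongDual ℂ (StrongDual ℂ A)) : StrongDual ℂ (StrongDual ℂ A) :=
  Γ'.comp (arensOdot A Γ)

/-- The space `UCB_Ψ(Ĝ) = A* ⬝ A`: the norm closure in `A*` of the linear span of
`{u • T : u ∈ A, T ∈ A*}`. -/
def UCBSubmodule : Submodule ℂ (StrongDual ℂ A) :=
  (Submodule.span ℂ {T | ∃ (u : A) (S : StrongDual ℂ A), T = dotAct A u S}).topologicalClosure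

variable {A} in
theorem dotAct_mem_UCBSubmodule (u : A) (S : StrongDual ℂ A) :
    dotAct A u S ∈ UCBSubmodule A :=
  Submodule.le_topologicalClosure _ (Submodule.subset_span ⟨u, S, rfl⟩)

variable {A} in
/-- The restriction of `Γ ∈ A**` to the subspace `UCB_Ψ(Ĝ) ⊆ A*`. -/
def restrictToUCB (Γ : StrongDual ℂ (StrongDual ℂ A)) : StrongDual ℂ ↥(UCBSubmodule A) :=
  Γ.comp (UCBSubmodule A).subtypeL

end Arens

/-! ### Dual maps, supports, radicals, topological centres, amenability -/

/-- The adjoint (dual map) of a continuous linear map. -/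
def dualMapL {E F : Type*} [NormedAddCommGroup E] [NormedSpace ℂ E]
    [NormedAddCommGroup F] [NormedSpace ℂ F] (m : E →L[ℂ] F) :
    StrongDual ℂ F →L[ℂ] StrongDual ℂ E :=
  (ContinuousLinearMap.compL ℂ E F ℂ).flip m

section Support

variable {G : Type*} [TopologicalSpace G] {A : Type*} [NonUnitalNormedCommRing A]
  [NormedSpace ℂ A]

/-- The support of a functional `T ∈ A* = PM_Ψ(G)`: `x ∉ supp T` iff there is a
neighbourhood `V` of `x` such that `⟨T, v⟩ = 0` for all `v ∈ A` supported in `V`. -/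
def pmSupport (ι : A → C₀(G, ℂ)) (T : StrongDual ℂ A) : Set G :=
  {x | ∀ V ∈ nhds x, ∃ a : A, tsupport ⇑(ι a) ⊆ V ∧ T a ≠ 0}

end Support

/-- `z` is left quasi-regular with respect to the multiplication `mul`:
there is `b` with `b + z + b * z = 0` (i.e. `1 + z` has a left inverse `1 + b`
in the unitization). -/
def IsLeftQuasiRegularWith {R : Type*} [AddCommGroup R] (mul : R → R → R) (z : R) : Prop :=
  ∃ b, b + z + mul b z = 0

/-- Membership in the Jacobson radical of the (possibly non-unital) ring `(R, +, mul)`: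
every element of the right ideal generated by `a` is left quasi-regular. -/
def MemJacobsonRadicalWith {R : Type*} [AddCommGroup R] (mul : R → R → R) (a : R) : Prop :=
  ∀ (x : R) (n : ℤ), IsLeftQuasiRegularWith mul (mul a x + n • a)

/-- The (possibly non-unital) ring `(R, +, mul)` is semi-simple: its Jacobson radical
is `{0}`. -/
def IsSemisimpleWith {R : Type*} [AddCommGroup R] (mul : R → R → R) : Prop :=
  ∀ a, MemJacobsonRadicalWith mul a → a = 0

/-- The topological centre of the dual of `E` with respect to a product `mul` on the
dual: the set of all `m` such that `m' ↦ mul m m'` is `w*`-`w*`-continuous. -/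
def topCenterWith {E : Type*} [NormedAddCommGroup E] [NormedSpace ℂ E]
    (mul : StrongDual ℂ E → StrongDual ℂ E → StrongDual ℂ E) : Set (StrongDual ℂ E) :=
  {m | Continuous fun m' : WeakDual ℂ E =>
    StrongDual.toWeakDual (mul m (WeakDual.toStrongDual m'))}

section Amenable

variable {G : Type*} [MeasurableSpace G] [Group G]

/-- Amenability of `G`: there is a positive, norm-one, left translation invariant
linear functional on `L^∞(G)`. -/
def HasLeftInvariantMean (μ : Measure G) : Prop :=
  ∃ Λ : Lp ℝ ⊤ μ →L[ℝ] ℝ, ‖Λ‖ = 1 ∧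
    (∀ f : Lp ℝ ⊤ μ, (∀ᵐ y ∂μ, 0 ≤ f y) → 0 ≤ Λ f) ∧
    ∀ (x : G) (f g : Lp ℝ ⊤ μ), (∀ᵐ y ∂μ, g y = f (x⁻¹ * y)) → Λ g = Λ f

end Amenable

/-- A normed space is weakly sequentially complete if every weakly Cauchy sequence
converges weakly. -/
def WeaklySequentiallyComplete (E : Type*) [NormedAddCommGroup E] [NormedSpace ℂ E] : Prop :=
  ∀ u : ℕ → E, (∀ T : StrongDual ℂ E, CauchySeq fun n => T (u n)) →
    ∃ x : E, ∀ T : StrongDual ℂ E, Tendsto (fun n => T (u n)) atTop (nhds (T x))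

section PF

variable {G : Type*} [MeasurableSpace G] [Group G] [TopologicalSpace G]

/-- The algebra of `Ψ`-pseudofunctions `PF_Ψ(G)`, realised inside `A_Φ(G)* = PM_Ψ(G)`:
the norm closure of the span of the functionals induced by `L¹(G)`-functions. -/
def PFSubmodule (μ : Measure G) {A : Type*} [NonUnitalNormedCommRing A]
    [NormedSpace ℂ A] (ι : A → C₀(G, ℂ)) : Submodule ℂ (StrongDual ℂ A) :=
  (Submodule.span ℂ {T | ∃ f : G → ℂ, Integrable f μ ∧
    ∀ a, T a = ∫ x, f x * ι a x ∂μ}).topologicalClosure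

end PF


/-! ### Standing hypotheses -/

variable {G : Type*} [Group G] [TopologicalSpace G] [IsTopologicalGroup G]
  [LocallyCompactSpace G] [MeasurableSpace G] [BorelSpace G]

/-- If the Banach algebra `A_Φ(G)**` (first Arens product) has a left
identity, then `UCB_Ψ(Ĝ) = PM_Ψ(G)`. -/
theorem ucb_eq_pm_of_bidual_has_left_identity
    (μ : Measure G) [μ.IsHaarMeasure] (Φ Ψ : ℝ → ℝ)
    (hpair : IsComplementaryYoungPair Φ Ψ) (hΦΔ : HasDeltaTwo Φ) (hΨΔ : HasDeltaTwo Ψ)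
    (A : Type*) [NonUnitalNormedCommRing A] [NormedSpace ℂ A] [SMulCommClass ℂ A A]
    [IsScalarTower ℂ A A] [CompleteSpace A] (ι : A → C₀(G, ℂ))
    (hA : IsOrliczFigaTalamancaHerzAlgebra μ Φ Ψ A ι)
    (hE : ∃ E : StrongDual ℂ (StrongDual ℂ A), ∀ Γ : StrongDual ℂ (StrongDual ℂ A), arens A E Γ = Γ) :
    UCBSubmodule A = ⊤ := by
  obtain ⟨E, hEleft⟩ := hE
  by_contra hne
  -- obtain a pseudomeasure `T` outside `UCB`
  obtain ⟨T, hT⟩ : ∃ T : StrongDual ℂ A, T ∉ UCBSubmodule A := by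
    by_contra h'
    push_neg at h'
    exact hne (Submodule.eq_top_iff'.2 h')
  haveI hclosed : IsClosed ((UCBSubmodule A : Set (StrongDual ℂ A))) :=
    Submodule.isClosed_topologicalClosure _
  -- work in the quotient normed space
  set Q := StrongDual ℂ A ⧸ UCBSubmodule A
  have hmkne : (Submodule.Quotient.mk T : Q) ≠ 0 := by
    simpa [Submodule.Quotient.mk_eq_zero] using hT
  obtain ⟨g, hg1, hgT⟩ := exists_dual_vector ℂ (Submodule.Quotient.mk T : Q)
    ((norm_ne_zero_iff (a := (Submodule.Quotient.mk T : Q))).mpr hmkne)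
  -- the quotient map as a continuous linear map
  let π : StrongDual ℂ A →L[ℂ] Q :=
    (UCBSubmodule A).mkQL
  -- the separating functional
  set Γ : StrongDual ℂ (StrongDual ℂ A) := g.comp π with hΓ
  have hΓvanish : ∀ S ∈ UCBSubmodule A, Γ S = 0 := by
    intro S hS
    have : (Submodule.Quotient.mk S : Q) = 0 := (Submodule.Quotient.mk_eq_zero _).2 hS
    simp only [hΓ, ContinuousLinearMap.comp_apply]
    have hπ : π S = (Submodule.Quotient.mk S : Q) := rfl
    rw [hπ, this, map_zero]
  -- `Γ ⊙ S = 0` for every `S`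
  have hodot : ∀ S : StrongDual ℂ A, arensOdot A Γ S = 0 := by
    intro S
    ext u
    have : arensOdot A Γ S u = Γ (dotAct A u S) := rfl
    rw [this, hΓvanish _ (dotAct_mem_UCBSubmodule u S)]
    rfl
  -- hence `Γ = E □ Γ = 0`, contradicting `Γ T ≠ 0`
  have hΓT : Γ T = 0 := by
    have h1 : arens A E Γ = Γ := hEleft Γ
    have h2 : (arens A E Γ) T = E (arensOdot A Γ T) := rfl
    rw [← h1, h2, hodot T, map_zero]
  have hTpos : Γ T ≠ 0 := by
    have hπT : π T = (Submodule.Quotient.mk T : Q) := rfl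
    have : Γ T = g (Submodule.Quotient.mk T : Q) := by
      simp only [hΓ, ContinuousLinearMap.comp_apply, hπT]
    rw [this, hgT]
    simp [hmkne]
    exact (norm_ne_zero_iff (a := (Submodule.Quotient.mk T : Q))).mpr hmkne
  exact hTpos hΓT

end
end

section
/- The set I = {Γ ∈ A_Φ(G)** : ⟨Γ, λ_Ψ(e)⟩ = 0 and ⟨Γ, u·T⟩ = u(e)⟨Γ, T⟩ for all u ∈ A_Φ(G) and T ∈ PM_Ψ(G)} is a two-sided ideal of the Banach algebra A_Φ(G)** (first Arens product) satisfying I □ I = {0}; consequently I is contained in the Jacobson radical of A_Φ(G)**. -/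
open MeasureTheory Filter Topology NormedSpace
open scoped ENNReal ZeroAtInfty

noncomputable section

/-! ### Standing hypotheses -/

variable {G : Type*} [Group G] [TopologicalSpace G] [IsTopologicalGroup G]
  [LocallyCompactSpace G] [MeasurableSpace G] [BorelSpace G]

/-- The set `I = {Γ ∈ A_Φ(G)** : ⟨Γ, λ_Ψ(e)⟩ = 0, ⟨Γ, u ⬝ T⟩ = u(e) ⟨Γ, T⟩}`, where
`lamE = λ_Ψ(e)` is evaluation at the identity. -/
def timIdealSet {G : Type*} [Group G] [TopologicalSpace G]
    {A : Type*} [NonUnitalNormedCommRing A] [NormedSpace ℂ A] [SMulCommClass ℂ A A]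
    [IsScalarTower ℂ A A] (ι : A → C₀(G, ℂ)) (lamE : StrongDual ℂ A) :
    Set (StrongDual ℂ (StrongDual ℂ A)) :=
  {Γ | Γ lamE = 0 ∧ ∀ (u : A) (T : StrongDual ℂ A), Γ (dotAct A u T) = ι u 1 * Γ T}

/-- The set `I` above is a two-sided ideal of `A_Φ(G)**` (first Arens
product) with `I □ I = {0}`; consequently `I` is contained in the Jacobson radical of
`A_Φ(G)**`.  Here `lamE` is `λ_Ψ(e)`, i.e. evaluation at the identity of `G`. -/
theorem timIdealSet_isIdeal_sq_zero_subset_radical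
    (μ : Measure G) [μ.IsHaarMeasure] (Φ Ψ : ℝ → ℝ)
    (hpair : IsComplementaryYoungPair Φ Ψ) (hΦΔ : HasDeltaTwo Φ) (hΨΔ : HasDeltaTwo Ψ)
    (A : Type*) [NonUnitalNormedCommRing A] [NormedSpace ℂ A] [SMulCommClass ℂ A A]
    [IsScalarTower ℂ A A] [CompleteSpace A] (ι : A → C₀(G, ℂ))
    (hA : IsOrliczFigaTalamancaHerzAlgebra μ Φ Ψ A ι)
    (lamE : StrongDual ℂ A) (hlamE : ∀ a : A, lamE a = ι a 1) :
    (∀ Γ ∈ timIdealSet ι lamE, ∀ Δ : StrongDual ℂ (StrongDual ℂ A),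
        arens A Δ Γ ∈ timIdealSet ι lamE ∧ arens A Γ Δ ∈ timIdealSet ι lamE) ∧
    (∀ Γ ∈ timIdealSet ι lamE, ∀ Δ ∈ timIdealSet ι lamE, arens A Γ Δ = 0) ∧
    (∀ Γ ∈ timIdealSet ι lamE, MemJacobsonRadicalWith (arens A) Γ) := by
  classical
  have hdot : ∀ (u : A) (T : StrongDual ℂ A) (v : A), dotAct A u T v = T (u * v) := fun _ _ _ => rfl
  have hod : ∀ (Γ : StrongDual ℂ (StrongDual ℂ A)) (T : StrongDual ℂ A) (u : A),
      arensOdot A Γ T u = Γ (dotAct A u T) := fun _ _ _ => rfl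
  have har : ∀ (Γ' Γ : StrongDual ℂ (StrongDual ℂ A)) (T : StrongDual ℂ A),
      arens A Γ' Γ T = Γ' (arensOdot A Γ T) := fun _ _ _ => rfl
  have hmulι : ∀ u v : A, ι (u * v) 1 = ι u 1 * ι v 1 := by
    intro u v; rw [hA.map_mul]; rfl
  have hdd : ∀ (u v : A) (T : StrongDual ℂ A), dotAct A v (dotAct A u T) = dotAct A (u * v) T := by
    intro u v T; ext w; simp only [hdot, mul_assoc]
  have hodd : ∀ (Δ : StrongDual ℂ (StrongDual ℂ A)) (u : A) (T : StrongDual ℂ A),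
      arensOdot A Δ (dotAct A u T) = dotAct A u (arensOdot A Δ T) := by
    intro Δ u T; ext v; rw [hod, hdd, hdot, hod]
  have hdlam : ∀ v : A, dotAct A v lamE = ι v 1 • lamE := by
    intro v; ext w
    rw [hdot, hlamE, hmulι, ContinuousLinearMap.smul_apply, hlamE, smul_eq_mul]
  have hkey : ∀ Γ ∈ timIdealSet ι lamE, ∀ T : StrongDual ℂ A,
      arensOdot A Γ T = Γ T • lamE := by
    intro Γ hΓ T; ext u
    rw [hod, hΓ.2 u T, ContinuousLinearMap.smul_apply, hlamE, smul_eq_mul, mul_comm]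
  have hodlam : ∀ (Δ : StrongDual ℂ (StrongDual ℂ A)), arensOdot A Δ lamE = Δ lamE • lamE := by
    intro Δ; ext v
    rw [hod, hdlam, _root_.map_smul, ContinuousLinearMap.smul_apply, smul_eq_mul, smul_eq_mul,
      mul_comm, hlamE]
  have hright : ∀ Γ ∈ timIdealSet ι lamE, ∀ Δ, arens A Δ Γ ∈ timIdealSet ι lamE := by
    intro Γ hΓ Δ
    constructor
    · rw [har, hkey Γ hΓ lamE, hΓ.1]; simp
    · intro u T
      rw [har, hkey Γ hΓ (dotAct A u T), hΓ.2 u T, har, hkey Γ hΓ T, _root_.map_smul, _root_.map_smul,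
        smul_eq_mul, smul_eq_mul, mul_assoc]
  have hleft : ∀ Γ ∈ timIdealSet ι lamE, ∀ Δ, arens A Γ Δ ∈ timIdealSet ι lamE := by
    intro Γ hΓ Δ
    constructor
    · rw [har, hodlam, _root_.map_smul, hΓ.1, smul_zero]
    · intro u T
      rw [har, hodd, hΓ.2 u (arensOdot A Δ T), har]
  have hsq : ∀ Γ ∈ timIdealSet ι lamE, ∀ Δ ∈ timIdealSet ι lamE, arens A Γ Δ = 0 := by
    intro Γ hΓ Δ hΔ; ext T
    rw [har, hkey Δ hΔ T, _root_.map_smul, hΓ.1, smul_zero, ContinuousLinearMap.zero_apply]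
  have happly_add : ∀ (Γ Δ : StrongDual ℂ (StrongDual ℂ A)) (T : StrongDual ℂ A),
      (Γ + Δ) T = Γ T + Δ T := fun _ _ _ => rfl
  have happly_zsmul : ∀ (n : ℤ) (Γ : StrongDual ℂ (StrongDual ℂ A)) (T : StrongDual ℂ A),
      (n • Γ) T = n • Γ T := by
    intro n Γ T
    induction n using Int.induction_on with
    | zero => simp
    | succ k ih => simp
    | pred k ih => simp
  have hadd : ∀ Γ ∈ timIdealSet ι lamE, ∀ Δ ∈ timIdealSet ι lamE,
      Γ + Δ ∈ timIdealSet ι lamE := by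
    intro Γ hΓ Δ hΔ
    constructor
    · rw [happly_add, hΓ.1, hΔ.1, add_zero]
    · intro u T
      rw [happly_add, hΓ.2 u T, hΔ.2 u T, happly_add, mul_add]
  have hzsmul : ∀ Γ ∈ timIdealSet ι lamE, ∀ n : ℤ, n • Γ ∈ timIdealSet ι lamE := by
    intro Γ hΓ n
    constructor
    · rw [happly_zsmul, hΓ.1, smul_zero]
    · intro u T
      rw [happly_zsmul, hΓ.2 u T, happly_zsmul, mul_smul_comm]
  have hlqr : ∀ z ∈ timIdealSet ι lamE, IsLeftQuasiRegularWith (arens A) z := by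
    intro z hz
    refine ⟨-z, ?_⟩
    have hneg : arens A (-z) z = - arens A z z := by
      show (-z).comp (arensOdot A z) = -(z.comp (arensOdot A z))
      exact ContinuousLinearMap.neg_comp z (arensOdot A z)
    rw [hneg, hsq z hz z hz]
    abel
  refine ⟨fun Γ hΓ Δ => ⟨hright Γ hΓ Δ, hleft Γ hΓ Δ⟩, hsq, ?_⟩
  intro Γ hΓ x n
  exact hlqr _ (hadd _ (hleft Γ hΓ x) _ (hzsmul Γ hΓ n))

end
end
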